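/- arXiv:math/0407391 — 4 statements merged into one kernel-verified Lean document; each statement's English description precedes it below -/
import Mathlib

section
/- A centered Gaussian is not the Fourier transform of a compactly supported finite measure: for every t > 0, γ > 0 and every finite complex measure μ supported in [−γ, γ], it is not the case that ∫ e^{iyv} dμ(v) = e^{-t y²} for all y ∈ ℝ. -/
open MeasureTheory Complex Real



noncomputable section

lemma norm_cpow_half {x : ℝ} (hx : 0 ≤ x) : ‖((x : ℂ)) ^ (1/2 : ℂ)‖ = Real.sqrt x := by
  have : ((x ^ (1/2 : ℝ) : ℝ) : ℂ) = (x : ℂ) ^ (1/2 : ℂ) := by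
    rw [Complex.ofReal_cpow hx]; norm_num
  rw [← this, Complex.norm_real, Real.norm_eq_abs, _root_.abs_of_nonneg (Real.rpow_nonneg hx _),
    Real.sqrt_eq_rpow]

lemma gauss_uncurry_integrable (t b : ℝ) (ht : 0 < t) (μ : Measure ℝ) [IsFiniteMeasure μ] :
    Integrable (fun p : ℝ × ℝ =>
      Complex.exp (-(t:ℂ) * p.1 ^ 2 + Complex.I * b * p.1) * Complex.exp (Complex.I * p.1 * p.2))
      (volume.prod μ) := by
  have hdom : Integrable (fun p : ℝ × ℝ => Real.exp (-t * p.1 ^ 2) * (1 : ℝ)) (volume.prod μ) := by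
    exact (by simpa [sq] using integrable_exp_neg_mul_sq ht :
      Integrable (fun y : ℝ => Real.exp (-t * y ^ 2)) volume).mul_prod (integrable_const 1)
  refine hdom.mono' ?_ ?_
  · apply Continuous.aestronglyMeasurable
    fun_prop
  · filter_upwards with p
    rw [norm_mul, Complex.norm_exp, Complex.norm_exp]
    simp [← Complex.ofReal_pow, mul_comm]

lemma gauss_swap (t b : ℝ) (ht : 0 < t) (μ : Measure ℝ) [IsFiniteMeasure μ] :
    (∫ y : ℝ, Complex.exp (-(t:ℂ) * y ^ 2 + Complex.I * b * y)
        * ∫ v : ℝ, Complex.exp (Complex.I * y * v) ∂μ)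
      = ((Real.pi / t : ℝ) : ℂ) ^ (1/2 : ℂ)
        * ∫ v : ℝ, Complex.exp (-(((b + v) ^ 2 / (4 * t) : ℝ) : ℂ)) ∂μ := by
  have hF := gauss_uncurry_integrable t b ht μ
  calc ∫ y : ℝ, Complex.exp (-(t:ℂ) * y ^ 2 + Complex.I * b * y)
          * ∫ v : ℝ, Complex.exp (Complex.I * y * v) ∂μ
      = ∫ y : ℝ, ∫ v : ℝ, Complex.exp (-(t:ℂ) * y ^ 2 + Complex.I * b * y)
          * Complex.exp (Complex.I * y * v) ∂μ := by
        congr 1; ext y; rw [MeasureTheory.integral_const_mul]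
    _ = ∫ v : ℝ, (∫ y : ℝ, Complex.exp (-(t:ℂ) * y ^ 2 + Complex.I * b * y)
          * Complex.exp (Complex.I * y * v)) ∂μ := integral_integral_swap hF
    _ = ∫ v : ℝ, ((Real.pi / t : ℝ) : ℂ) ^ (1/2 : ℂ)
          * Complex.exp (-(((b + v) ^ 2 / (4 * t) : ℝ) : ℂ)) ∂μ := by
        congr 1; ext v
        have h1 : ∀ y : ℝ, Complex.exp (-(t:ℂ) * y ^ 2 + Complex.I * b * y)
            * Complex.exp (Complex.I * y * v)
            = Complex.exp ((-(t:ℂ)) * y ^ 2 + (Complex.I * ((b : ℂ) + v)) * y + 0) := by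
          intro y; rw [← Complex.exp_add]; ring_nf
        simp_rw [h1]
        rw [integral_cexp_quadratic (by simpa using ht : (-(t:ℂ)).re < 0)]
        congr 1
        · norm_num
        · congr 1
          have : (Complex.I * ((b:ℂ) + v)) ^ 2 = -((b:ℂ) + v) ^ 2 := by
            rw [mul_pow, Complex.I_sq]; ring
          rw [this]
          push_cast
          field_simp
          ring
    _ = ((Real.pi / t : ℝ) : ℂ) ^ (1/2 : ℂ)
        * ∫ v : ℝ, Complex.exp (-(((b + v) ^ 2 / (4 * t) : ℝ) : ℂ)) ∂μ := by
        rw [MeasureTheory.integral_const_mul]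

end

noncomputable section

lemma gauss_rhs (t b : ℝ) (ht : 0 < t) :
    (∫ y : ℝ, Complex.exp (-(t:ℂ) * y ^ 2 + Complex.I * b * y) * ((Real.exp (-t * y ^ 2) : ℝ) : ℂ))
      = ((Real.pi / (2*t) : ℝ) : ℂ) ^ (1/2 : ℂ) * Complex.exp (-((b ^ 2 / (8*t) : ℝ) : ℂ)) := by
  have h1 : ∀ y : ℝ, Complex.exp (-(t:ℂ) * y ^ 2 + Complex.I * b * y)
      * ((Real.exp (-t * y ^ 2) : ℝ) : ℂ)
      = Complex.exp ((-(2*t):ℂ) * y ^ 2 + (Complex.I * b) * y + 0) := by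
    intro y
    rw [Complex.ofReal_exp, ← Complex.exp_add]
    push_cast
    ring_nf
  simp_rw [h1]
  rw [integral_cexp_quadratic (show (-(2*t) : ℂ).re < 0 by simpa using by positivity)]
  congr 1
  · congr 1
    push_cast
    rw [neg_neg]
  · congr 1
    have : (Complex.I * (b:ℂ)) ^ 2 = -(b:ℂ) ^ 2 := by rw [mul_pow, Complex.I_sq]; ring
    rw [this]
    push_cast
    field_simp
    ring

lemma choose_b (t γ M : ℝ) (ht : 0 < t) (hM : 0 ≤ M) :
    ∃ b : ℝ, γ ≤ b ∧
      Real.sqrt (Real.pi/t) * ((M+1) * Real.exp ((-b^2 + 4*b*γ - 2*γ^2)/(8*t)))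
        < Real.sqrt (Real.pi/(2*t)) := by
  have h0 : Filter.Tendsto (fun b : ℝ => (b + (-(2*γ))) ^ 2) Filter.atTop Filter.atTop :=
    (Filter.tendsto_pow_atTop two_ne_zero).comp (Filter.tendsto_atTop_add_const_right _ _ Filter.tendsto_id)
  have h1 : Filter.Tendsto (fun b : ℝ => (-b^2 + 4*b*γ - 2*γ^2)/(8*t)) Filter.atTop Filter.atBot := by
    have hq : (fun b : ℝ => (-b^2 + 4*b*γ - 2*γ^2)/(8*t))
        = fun b : ℝ => (-((b + (-(2*γ))) ^ 2) + 2*γ^2)/(8*t) := by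
      funext b; ring
    rw [hq]
    exact (Filter.tendsto_atBot_add_const_right _ _
      (Filter.tendsto_neg_atTop_atBot.comp h0)).atBot_div_const (by positivity)
  have h2 := ((Real.tendsto_exp_atBot.comp h1).const_mul (Real.sqrt (Real.pi/t) * (M+1)))
  rw [mul_zero] at h2
  have hpos : 0 < Real.sqrt (Real.pi/(2*t)) := Real.sqrt_pos.mpr (by positivity)
  obtain ⟨b, hb1, hb2⟩ := ((Filter.eventually_ge_atTop γ).and (h2.eventually_lt_const hpos)).exists
  exact ⟨b, hb1, by simpa [Function.comp, mul_assoc] using hb2⟩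

end


/-- A Gaussian is not the Fourier transform of a finite complex measure supported in a
compact interval.  A finite complex Borel measure on ℝ is (by the Jordan / Hahn
decomposition) of the form μ₁ - μ₂ + i(μ₃ - μ₄) with each μⱼ a finite positive measure;
we state the result in this generality. -/
theorem gaussian_not_fourier_of_compactly_supported_measure
    (t γ : ℝ) (ht : 0 < t) (hγ : 0 < γ)
    (μ₁ μ₂ μ₃ μ₄ : Measure ℝ)
    [IsFiniteMeasure μ₁] [IsFiniteMeasure μ₂] [IsFiniteMeasure μ₃] [IsFiniteMeasure μ₄]
    (h₁ : μ₁ (Set.Icc (-γ) γ)ᶜ = 0) (h₂ : μ₂ (Set.Icc (-γ) γ)ᶜ = 0)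
    (h₃ : μ₃ (Set.Icc (-γ) γ)ᶜ = 0) (h₄ : μ₄ (Set.Icc (-γ) γ)ᶜ = 0) :
    ¬ (∀ y : ℝ,
        ((∫ v : ℝ, Complex.exp (Complex.I * y * v) ∂μ₁)
          - (∫ v : ℝ, Complex.exp (Complex.I * y * v) ∂μ₂))
        + Complex.I * ((∫ v : ℝ, Complex.exp (Complex.I * y * v) ∂μ₃)
          - (∫ v : ℝ, Complex.exp (Complex.I * y * v) ∂μ₄))
        = (Real.exp (-t * y ^ 2) : ℂ)) := by
  intro H
  set M : ℝ := (μ₁ Set.univ).toReal + (μ₂ Set.univ).toReal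
      + (μ₃ Set.univ).toReal + (μ₄ Set.univ).toReal with hMdef
  have hM0 : 0 ≤ M := by positivity
  obtain ⟨b, hbγ, hb⟩ := choose_b t γ M ht hM0
  -- key norm bound for each measure
  have key : ∀ (μ : Measure ℝ) [IsFiniteMeasure μ], μ (Set.Icc (-γ) γ)ᶜ = 0 →
      ‖∫ v : ℝ, Complex.exp (-(((b + v) ^ 2 / (4 * t) : ℝ) : ℂ)) ∂μ‖
        ≤ Real.exp (-((b-γ)^2/(4*t))) * (μ Set.univ).toReal := by
    intro μ _ hμ
    apply norm_integral_le_of_norm_le_const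
    have hae : ∀ᵐ v ∂μ, v ∈ Set.Icc (-γ) γ := by
      rw [MeasureTheory.ae_iff]
      convert hμ using 2
      rfl
    filter_upwards [hae] with v hv
    rw [Complex.norm_exp]
    simp only [Complex.neg_re, Complex.ofReal_re]
    apply Real.exp_le_exp.mpr
    have h0 : (0:ℝ) ≤ b - γ := sub_nonneg.mpr hbγ
    have h1 : b - γ ≤ b + v := by linarith [hv.1]
    have h2 : (b-γ)^2 ≤ (b+v)^2 := by nlinarith
    have h3 : (b-γ)^2/(4*t) ≤ (b+v)^2/(4*t) := by gcongr
    linarith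
  have k₁ := key μ₁ h₁
  have k₂ := key μ₂ h₂
  have k₃ := key μ₃ h₃
  have k₄ := key μ₄ h₄
  -- integrability of the four weighted Fourier transforms
  have int1 : Integrable (fun y : ℝ => Complex.exp (-(t:ℂ) * y ^ 2 + Complex.I * b * y)
      * ∫ v : ℝ, Complex.exp (Complex.I * y * v) ∂μ₁) volume := by
    simpa [MeasureTheory.integral_const_mul] using
      (gauss_uncurry_integrable t b ht μ₁).integral_prod_left
  have int2 : Integrable (fun y : ℝ => Complex.exp (-(t:ℂ) * y ^ 2 + Complex.I * b * y)
      * ∫ v : ℝ, Complex.exp (Complex.I * y * v) ∂μ₂) volume := by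
    simpa [MeasureTheory.integral_const_mul] using
      (gauss_uncurry_integrable t b ht μ₂).integral_prod_left
  have int3 : Integrable (fun y : ℝ => Complex.exp (-(t:ℂ) * y ^ 2 + Complex.I * b * y)
      * ∫ v : ℝ, Complex.exp (Complex.I * y * v) ∂μ₃) volume := by
    simpa [MeasureTheory.integral_const_mul] using
      (gauss_uncurry_integrable t b ht μ₃).integral_prod_left
  have int4 : Integrable (fun y : ℝ => Complex.exp (-(t:ℂ) * y ^ 2 + Complex.I * b * y)
      * ∫ v : ℝ, Complex.exp (Complex.I * y * v) ∂μ₄) volume := by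
    simpa [MeasureTheory.integral_const_mul] using
      (gauss_uncurry_integrable t b ht μ₄).integral_prod_left
  -- integrate the identity against the Gaussian weight
  have hEq : (∫ y : ℝ, Complex.exp (-(t:ℂ) * y ^ 2 + Complex.I * b * y) *
        (((∫ v : ℝ, Complex.exp (Complex.I * y * v) ∂μ₁)
          - (∫ v : ℝ, Complex.exp (Complex.I * y * v) ∂μ₂))
        + Complex.I * ((∫ v : ℝ, Complex.exp (Complex.I * y * v) ∂μ₃)
          - (∫ v : ℝ, Complex.exp (Complex.I * y * v) ∂μ₄))))
      = ∫ y : ℝ, Complex.exp (-(t:ℂ) * y ^ 2 + Complex.I * b * y)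
          * ((Real.exp (-t * y ^ 2) : ℝ) : ℂ) := by
    refine integral_congr_ae (Filter.Eventually.of_forall fun y => ?_)
    dsimp only
    rw [H y]
  have h12 : (∫ y : ℝ, (Complex.exp (-(t:ℂ) * y ^ 2 + Complex.I * b * y)
            * (∫ v : ℝ, Complex.exp (Complex.I * y * v) ∂μ₁)
        - Complex.exp (-(t:ℂ) * y ^ 2 + Complex.I * b * y)
            * ∫ v : ℝ, Complex.exp (Complex.I * y * v) ∂μ₂))
      = (∫ y : ℝ, Complex.exp (-(t:ℂ) * y ^ 2 + Complex.I * b * y)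
            * ∫ v : ℝ, Complex.exp (Complex.I * y * v) ∂μ₁)
        - ∫ y : ℝ, Complex.exp (-(t:ℂ) * y ^ 2 + Complex.I * b * y)
            * ∫ v : ℝ, Complex.exp (Complex.I * y * v) ∂μ₂ := integral_sub int1 int2
  have h34 : (∫ y : ℝ, (Complex.exp (-(t:ℂ) * y ^ 2 + Complex.I * b * y)
            * (∫ v : ℝ, Complex.exp (Complex.I * y * v) ∂μ₃)
        - Complex.exp (-(t:ℂ) * y ^ 2 + Complex.I * b * y)
            * ∫ v : ℝ, Complex.exp (Complex.I * y * v) ∂μ₄))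
      = (∫ y : ℝ, Complex.exp (-(t:ℂ) * y ^ 2 + Complex.I * b * y)
            * ∫ v : ℝ, Complex.exp (Complex.I * y * v) ∂μ₃)
        - ∫ y : ℝ, Complex.exp (-(t:ℂ) * y ^ 2 + Complex.I * b * y)
            * ∫ v : ℝ, Complex.exp (Complex.I * y * v) ∂μ₄ := integral_sub int3 int4
  have hI34 : (∫ y : ℝ, Complex.I * (Complex.exp (-(t:ℂ) * y ^ 2 + Complex.I * b * y)
            * (∫ v : ℝ, Complex.exp (Complex.I * y * v) ∂μ₃)
        - Complex.exp (-(t:ℂ) * y ^ 2 + Complex.I * b * y)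
            * ∫ v : ℝ, Complex.exp (Complex.I * y * v) ∂μ₄))
      = Complex.I * ∫ y : ℝ, (Complex.exp (-(t:ℂ) * y ^ 2 + Complex.I * b * y)
            * (∫ v : ℝ, Complex.exp (Complex.I * y * v) ∂μ₃)
        - Complex.exp (-(t:ℂ) * y ^ 2 + Complex.I * b * y)
            * ∫ v : ℝ, Complex.exp (Complex.I * y * v) ∂μ₄) :=
    MeasureTheory.integral_const_mul _ _
  have hadd : (∫ y : ℝ, ((Complex.exp (-(t:ℂ) * y ^ 2 + Complex.I * b * y)
            * (∫ v : ℝ, Complex.exp (Complex.I * y * v) ∂μ₁)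
        - Complex.exp (-(t:ℂ) * y ^ 2 + Complex.I * b * y)
            * ∫ v : ℝ, Complex.exp (Complex.I * y * v) ∂μ₂)
        + Complex.I * (Complex.exp (-(t:ℂ) * y ^ 2 + Complex.I * b * y)
            * (∫ v : ℝ, Complex.exp (Complex.I * y * v) ∂μ₃)
        - Complex.exp (-(t:ℂ) * y ^ 2 + Complex.I * b * y)
            * ∫ v : ℝ, Complex.exp (Complex.I * y * v) ∂μ₄)))
      = (∫ y : ℝ, (Complex.exp (-(t:ℂ) * y ^ 2 + Complex.I * b * y)
            * (∫ v : ℝ, Complex.exp (Complex.I * y * v) ∂μ₁)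
        - Complex.exp (-(t:ℂ) * y ^ 2 + Complex.I * b * y)
            * ∫ v : ℝ, Complex.exp (Complex.I * y * v) ∂μ₂))
        + ∫ y : ℝ, Complex.I * (Complex.exp (-(t:ℂ) * y ^ 2 + Complex.I * b * y)
            * (∫ v : ℝ, Complex.exp (Complex.I * y * v) ∂μ₃)
        - Complex.exp (-(t:ℂ) * y ^ 2 + Complex.I * b * y)
            * ∫ v : ℝ, Complex.exp (Complex.I * y * v) ∂μ₄) :=
    integral_add (int1.sub int2) ((int3.sub int4).const_mul Complex.I)
  have hsplit : (∫ y : ℝ, Complex.exp (-(t:ℂ) * y ^ 2 + Complex.I * b * y) *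
        (((∫ v : ℝ, Complex.exp (Complex.I * y * v) ∂μ₁)
          - (∫ v : ℝ, Complex.exp (Complex.I * y * v) ∂μ₂))
        + Complex.I * ((∫ v : ℝ, Complex.exp (Complex.I * y * v) ∂μ₃)
          - (∫ v : ℝ, Complex.exp (Complex.I * y * v) ∂μ₄))))
      = ((∫ y : ℝ, Complex.exp (-(t:ℂ) * y ^ 2 + Complex.I * b * y)
            * ∫ v : ℝ, Complex.exp (Complex.I * y * v) ∂μ₁)
        - (∫ y : ℝ, Complex.exp (-(t:ℂ) * y ^ 2 + Complex.I * b * y)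
            * ∫ v : ℝ, Complex.exp (Complex.I * y * v) ∂μ₂))
        + Complex.I * ((∫ y : ℝ, Complex.exp (-(t:ℂ) * y ^ 2 + Complex.I * b * y)
            * ∫ v : ℝ, Complex.exp (Complex.I * y * v) ∂μ₃)
          - (∫ y : ℝ, Complex.exp (-(t:ℂ) * y ^ 2 + Complex.I * b * y)
            * ∫ v : ℝ, Complex.exp (Complex.I * y * v) ∂μ₄)) := by
    rw [← h12, ← h34, ← hI34, ← hadd]
    refine integral_congr_ae (Filter.Eventually.of_forall fun y => ?_)
    dsimp only
    ring
  rw [hsplit, gauss_swap t b ht μ₁, gauss_swap t b ht μ₂, gauss_swap t b ht μ₃,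
    gauss_swap t b ht μ₄, gauss_rhs t b ht] at hEq
  set c : ℂ := ((Real.pi / t : ℝ) : ℂ) ^ (1/2 : ℂ) with hc
  set J₁ := ∫ v : ℝ, Complex.exp (-(((b + v) ^ 2 / (4 * t) : ℝ) : ℂ)) ∂μ₁ with hJ1
  set J₂ := ∫ v : ℝ, Complex.exp (-(((b + v) ^ 2 / (4 * t) : ℝ) : ℂ)) ∂μ₂ with hJ2
  set J₃ := ∫ v : ℝ, Complex.exp (-(((b + v) ^ 2 / (4 * t) : ℝ) : ℂ)) ∂μ₃ with hJ3
  set J₄ := ∫ v : ℝ, Complex.exp (-(((b + v) ^ 2 / (4 * t) : ℝ) : ℂ)) ∂μ₄ with hJ4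
  have hEq2 : c * ((J₁ - J₂) + Complex.I * (J₃ - J₄))
      = ((Real.pi / (2*t) : ℝ) : ℂ) ^ (1/2 : ℂ)
        * Complex.exp (-((b ^ 2 / (8*t) : ℝ) : ℂ)) := by
    rw [← hEq]; ring
  have hnorm := congrArg norm hEq2
  rw [norm_mul, norm_mul, norm_cpow_half (by positivity : (0:ℝ) ≤ Real.pi / t),
    norm_cpow_half (by positivity : (0:ℝ) ≤ Real.pi / (2*t))] at hnorm
  have hnE : ‖Complex.exp (-((b ^ 2 / (8*t) : ℝ) : ℂ))‖ = Real.exp (-(b^2/(8*t))) := by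
    rw [Complex.norm_exp, Complex.neg_re, Complex.ofReal_re]
  rw [hnE] at hnorm
  -- bound the left side
  have hS : ‖(J₁ - J₂) + Complex.I * (J₃ - J₄)‖ ≤ Real.exp (-((b-γ)^2/(4*t))) * M := by
    have t1 : ‖(J₁ - J₂) + Complex.I * (J₃ - J₄)‖ ≤ ‖J₁ - J₂‖ + ‖Complex.I * (J₃ - J₄)‖ :=
      norm_add_le _ _
    rw [norm_mul, Complex.norm_I, one_mul] at t1
    have t2 : ‖J₁ - J₂‖ ≤ ‖J₁‖ + ‖J₂‖ := norm_sub_le _ _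
    have t3 : ‖J₃ - J₄‖ ≤ ‖J₃‖ + ‖J₄‖ := norm_sub_le _ _
    have : Real.exp (-((b-γ)^2/(4*t))) * M
        = Real.exp (-((b-γ)^2/(4*t))) * (μ₁ Set.univ).toReal
          + Real.exp (-((b-γ)^2/(4*t))) * (μ₂ Set.univ).toReal
          + Real.exp (-((b-γ)^2/(4*t))) * (μ₃ Set.univ).toReal
          + Real.exp (-((b-γ)^2/(4*t))) * (μ₄ Set.univ).toReal := by
      rw [hMdef]; ring
    rw [this]
    linarith
  -- conclude
  have hc1 : (0:ℝ) ≤ Real.sqrt (Real.pi/t) := Real.sqrt_nonneg _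
  have hE : (0:ℝ) < Real.exp (-(b^2/(8*t))) := Real.exp_pos _
  have hQ : (0:ℝ) < Real.exp ((-b^2 + 4*b*γ - 2*γ^2)/(8*t)) := Real.exp_pos _
  have hKQE : Real.exp (-((b-γ)^2/(4*t)))
      = Real.exp ((-b^2 + 4*b*γ - 2*γ^2)/(8*t)) * Real.exp (-(b^2/(8*t))) := by
    rw [← Real.exp_add]
    congr 1
    field_simp
    ring
  have step1 : Real.sqrt (Real.pi/t) * ‖(J₁ - J₂) + Complex.I * (J₃ - J₄)‖
      ≤ Real.sqrt (Real.pi/t) * (Real.exp (-((b-γ)^2/(4*t))) * M) :=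
    mul_le_mul_of_nonneg_left hS hc1
  have step2 : Real.sqrt (Real.pi/t) * (Real.exp (-((b-γ)^2/(4*t))) * M)
      ≤ (Real.sqrt (Real.pi/t) * ((M+1) * Real.exp ((-b^2 + 4*b*γ - 2*γ^2)/(8*t))))
        * Real.exp (-(b^2/(8*t))) := by
    rw [hKQE]
    nlinarith [mul_nonneg hc1 (le_of_lt hQ), mul_pos hQ hE]
  have step3 : (Real.sqrt (Real.pi/t) * ((M+1) * Real.exp ((-b^2 + 4*b*γ - 2*γ^2)/(8*t))))
        * Real.exp (-(b^2/(8*t)))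
      < Real.sqrt (Real.pi/(2*t)) * Real.exp (-(b^2/(8*t))) :=
    mul_lt_mul_of_pos_right hb hE
  linarith
end

section
/- There is no measurable function w : (−γ, γ) → ℝ, integrable against e^{v²/(4t)}, and no constant c ∈ ℂ, with c ≠ 0, such that e^{-t y²} = c ∫_{−γ}^{γ} e^{iyv} e^{v²/(4t)} w(v) dv for all y ∈ ℝ. -/
open MeasureTheory Complex Real FourierTransform

theorem gaussian_not_weighted_strip_transform (t γ : ℝ) (ht : 0 < t) (hγ : 0 < γ) :
    ¬ ∃ (w : ℝ → ℝ) (c : ℂ), Measurable w ∧ c ≠ 0 ∧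
      IntegrableOn (fun v => Real.exp (v ^ 2 / (4 * t)) * w v) (Set.Ioo (-γ) γ) ∧
      ∀ y : ℝ,
        (Real.exp (-t * y ^ 2) : ℂ)
          = c * ∫ v in Set.Ioo (-γ) γ,
              Complex.exp (Complex.I * y * v) * Real.exp (v ^ 2 / (4 * t)) * (w v : ℂ) := by
  rintro ⟨w, c, hw, hc, hint, heq⟩
  set f : ℝ → ℂ := fun v => ((Real.exp (v ^ 2 / (4 * t)) * w v : ℝ) : ℂ) with hf
  set g : ℝ → ℂ := (Set.Ioo (-γ) γ).indicator f with hg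
  -- g is integrable
  have hg_int : Integrable g :=
    (integrable_indicator_iff measurableSet_Ioo).2 hint.ofReal
  -- Fourier transform of g is a Gaussian
  have hFg : 𝓕 g = fun ξ : ℝ => c⁻¹ • Complex.exp (-(π : ℂ) * (4 * π * t) * (ξ : ℂ) ^ 2) := by
    funext ξ
    have h1 := heq (-(2 * π * ξ))
    have h2 : (𝓕 g) ξ
        = ∫ v in Set.Ioo (-γ) γ, Complex.exp (Complex.I * ((-(2 * π * ξ) : ℝ) : ℂ) * v) * f v := by
      rw [Real.fourier_eq', ← integral_indicator measurableSet_Ioo]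
      congr 1
      funext v
      by_cases hv : v ∈ Set.Ioo (-γ) γ
      · simp only [hg, Set.indicator_of_mem hv, smul_eq_mul]
        congr 1
        rw [RCLike.inner_apply, conj_trivial]
        push_cast
        ring_nf
      · simp [hg, Set.indicator_of_notMem hv]
    have h3 : (Real.exp (-t * (-(2 * π * ξ)) ^ 2) : ℂ)
        = Complex.exp (-(π : ℂ) * (4 * π * t) * (ξ : ℂ) ^ 2) := by
      rw [Complex.ofReal_exp]
      congr 1
      push_cast
      ring
    have hintegral :
        ∫ v in Set.Ioo (-γ) γ, Complex.exp (Complex.I * ((-(2 * π * ξ) : ℝ) : ℂ) * v) * f v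
          = c⁻¹ * (Real.exp (-t * (-(2 * π * ξ)) ^ 2) : ℂ) := by
      rw [h1, ← mul_assoc, inv_mul_cancel₀ hc, one_mul]
      congr 1
      funext v
      simp only [hf, Complex.ofReal_mul, mul_assoc]
    rw [h2, hintegral, h3, smul_eq_mul]
  -- hence 𝓕 g is integrable
  have h4πt : (0:ℝ) < 4 * π * t := by positivity
  have base_int : Integrable (fun ξ : ℝ => Complex.exp (-(π : ℂ) * (4 * π * t) * (ξ : ℂ) ^ 2)) := by
    have hb : (0:ℝ) < 4 * π ^ 2 * t := by positivity
    have h := integrable_cexp_quadratic (b := ((4 * π ^ 2 * t : ℝ) : ℂ)) (by rw [Complex.ofReal_re]; exact hb) 0 0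
    apply h.congr
    filter_upwards with ξ
    show Complex.exp (-((4 * π ^ 2 * t : ℝ) : ℂ) * ξ ^ 2 + 0 * ξ + 0)
        = Complex.exp (-(π : ℂ) * (4 * π * t) * (ξ : ℂ) ^ 2)
    congr 1
    push_cast
    ring
  have hFg_int : Integrable (𝓕 g) := by
    rw [hFg]
    exact base_int.smul c⁻¹
  -- g is continuous at γ + 1 (locally zero there)
  have hnot : (γ + 1) ∉ Set.Ioo (-γ) γ := fun h => absurd h.2 (by linarith)
  have hcont : ContinuousAt g (γ + 1) := by
    have hev : g =ᶠ[nhds (γ + 1)] (fun _ => (0:ℂ)) := by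
      filter_upwards [Ioi_mem_nhds (show γ < γ + 1 by linarith)] with x hx
      have hx' : x ∉ Set.Ioo (-γ) γ := fun h => absurd h.2 (not_lt.2 (le_of_lt hx))
      simp [hg, Set.indicator_of_notMem hx']
    exact continuousAt_const.congr hev.symm
  have hgz : g (γ + 1) = 0 := by simp [hg, Set.indicator_of_notMem hnot]
  have hinv := hg_int.fourierInv_fourier_eq hFg_int hcont
  rw [hgz, Real.fourierInv_eq_fourier_neg, hFg] at hinv
  have hsmul : (𝓕 fun ξ : ℝ => c⁻¹ • Complex.exp (-(π : ℂ) * (4 * π * t) * (ξ : ℂ) ^ 2))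
      = c⁻¹ • (𝓕 fun ξ : ℝ => Complex.exp (-(π : ℂ) * (4 * π * t) * (ξ : ℂ) ^ 2)) :=
    VectorFourier.fourierIntegral_const_smul _ _ _ _ _
  rw [hsmul] at hinv
  have hre : (0:ℝ) < ((4 * (π:ℂ) * (t:ℂ)).re) := by
    have he : (4 * (π:ℂ) * (t:ℂ)) = ((4 * π * t : ℝ) : ℂ) := by push_cast; ring
    rw [he, Complex.ofReal_re]; exact h4πt
  rw [fourier_gaussian_pi (b := 4 * (π:ℂ) * (t:ℂ)) hre] at hinv
  simp only [Pi.smul_apply, smul_eq_mul] at hinv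
  have h1 : (4 * (π:ℂ) * (t:ℂ)) ^ (1 / 2 : ℂ) ≠ 0 := by
    rw [Ne, Complex.cpow_eq_zero_iff]
    rintro ⟨h, -⟩
    have he : (4 * (π:ℂ) * (t:ℂ)) = ((4 * π * t : ℝ) : ℂ) := by push_cast; ring
    rw [he, Complex.ofReal_eq_zero] at h
    linarith
  rcases mul_eq_zero.1 hinv with h | h
  · exact (inv_ne_zero hc) h
  rcases mul_eq_zero.1 h with h | h
  · rw [div_eq_zero_iff] at h
    rcases h with h | h
    · norm_num at h
    · exact h1 h
  · exact Complex.exp_ne_zero _ h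
end

section
/- Let φ ∈ ℝ with π/4 < φ < π/2, so that cos(2φ) ∈ (−1, 0). Set a = (−cos 2φ)^{-1/2} and b = (a² − a^{-2})^{1/2}, and let g = [[a, b],[0, 1/a]] ∈ SL(2,ℝ) and z = diag(e^{iφ}, e^{-iφ}). Then P(gz) = −2, where P(m) = tr(m mᵗ). -/
open Matrix Complex Real

theorem boundary_point_value (φ : ℝ) (h1 : Real.pi / 4 < φ) (h2 : φ < Real.pi / 2) :
    let a : ℝ := (Real.sqrt (-Real.cos (2 * φ)))⁻¹
    let b : ℝ := Real.sqrt (a ^ 2 - (a ^ 2)⁻¹)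
    let g : Matrix (Fin 2) (Fin 2) ℂ := !![(a : ℂ), (b : ℂ); 0, (a : ℂ)⁻¹]
    let z : Matrix (Fin 2) (Fin 2) ℂ :=
      !![Complex.exp (Complex.I * φ), 0; 0, Complex.exp (-Complex.I * φ)]
    Matrix.trace ((g * z) * (g * z)ᵀ) = -2 := by
  intro a b g z
  have hc : Real.cos (2 * φ) < 0 := by
    apply Real.cos_neg_of_pi_div_two_lt_of_lt
    · linarith
    · linarith [Real.pi_pos]
  have hcpos : (0:ℝ) < -Real.cos (2 * φ) := by linarith
  have ha2 : a ^ 2 = (-Real.cos (2 * φ))⁻¹ := by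
    simp only [a, inv_pow]
    rw [Real.sq_sqrt hcpos.le]
  have hc1 : -Real.cos (2 * φ) ≤ 1 := by
    have := Real.neg_one_le_cos (2 * φ); linarith
  have ha2ge : (1:ℝ) ≤ a ^ 2 := by
    rw [ha2]; exact (one_le_inv₀ hcpos).mpr hc1
  have hb2 : b ^ 2 = a ^ 2 - (a ^ 2)⁻¹ := by
    apply Real.sq_sqrt
    have : (a ^ 2)⁻¹ ≤ 1 := by
      rw [inv_le_one_iff₀]; right; exact ha2ge
    linarith
  have ha0 : (a : ℂ) ≠ 0 := by
    simp only [a]; norm_cast; positivity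
  have hexp : Complex.exp (Complex.I * φ) ^ 2 + Complex.exp (-Complex.I * φ) ^ 2
      = 2 * (Real.cos (2 * φ) : ℂ) := by
    rw [← Complex.exp_nat_mul, ← Complex.exp_nat_mul]
    rw [show (2:ℕ) * (Complex.I * φ) = (2*φ:ℝ)*Complex.I by push_cast; ring,
        show (2:ℕ) * (-Complex.I * φ) = -((2*φ:ℝ)*Complex.I) by push_cast; ring]
    rw [show ((Real.cos (2*φ) : ℝ):ℂ) = Complex.cos ((2*φ:ℝ):ℂ) by rw [Complex.ofReal_cos]]
    rw [← neg_mul, Complex.exp_mul_I, Complex.exp_mul_I, Complex.cos_neg, Complex.sin_neg]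
    ring
  have hgz : g * z = !![(a:ℂ) * Complex.exp (Complex.I * φ), (b:ℂ) * Complex.exp (-Complex.I * φ);
      0, (a:ℂ)⁻¹ * Complex.exp (-Complex.I * φ)] := by
    simp [g, z, Matrix.mul_fin_two]
  rw [hgz, show (!![(a:ℂ) * Complex.exp (Complex.I * φ), (b:ℂ) * Complex.exp (-Complex.I * φ);
      0, (a:ℂ)⁻¹ * Complex.exp (-Complex.I * φ)])ᵀ
      = !![(a:ℂ) * Complex.exp (Complex.I * φ), 0;
      (b:ℂ) * Complex.exp (-Complex.I * φ), (a:ℂ)⁻¹ * Complex.exp (-Complex.I * φ)]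
      from (Matrix.transposeᵣ_eq _).symm, Matrix.mul_fin_two, Matrix.trace_fin_two_of]
  have hb2' : (b:ℂ)^2 = (a:ℂ)^2 - ((a:ℂ)^2)⁻¹ := by
    exact_mod_cast congrArg (fun x : ℝ => (x:ℂ)) hb2
  have ha2' : ((a:ℂ)^2) * (Real.cos (2*φ) : ℂ) = -1 := by
    have : (a:ℝ)^2 * Real.cos (2*φ) = -1 := by
      rw [ha2]; field_simp; rw [div_self hc.ne]
    norm_cast at this ⊢
  have key : ((a:ℂ)^2) * (Complex.exp (Complex.I * φ) ^ 2 + Complex.exp (-Complex.I * φ) ^ 2) = -2 := by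
    rw [hexp]
    linear_combination 2 * ha2'
  simp only [neg_mul, inv_pow] at key hb2' ⊢
  field_simp
  have hone : ((a:ℂ)^2) * ((a:ℂ)⁻¹)^2 = 1 := by field_simp
  linear_combination ((a:ℂ)^2) * key + (Complex.exp (-(Complex.I * φ)) ^ 2) * ((a:ℂ)^2) * hb2'
    - (Complex.exp (-(Complex.I * φ)) ^ 2) * hone
end

section
/- Let φ ∈ ℝ with π/4 < φ < π/2 and c = (−cos 2φ)^{1/2} ∈ (0,1). Define a : [0,1] → ℝ by a(s) = (c + s(1 − c))/c, and σ(s) = 2 a(s)² cos(2φ). Then σ is continuous and strictly decreasing on [0,1], with σ(0) = 2 cos(2φ) ∈ (−2, 0) and σ(1) = −2; moreover σ(s) = P(γ(s)·diag(e^{iφ}, e^{-iφ})) where γ(s) = [[a(s), b(s)],[0, 1/a(s)]] with b(s) = (a(s)² − a(s)^{-2})^{1/2} and P(m) = tr(m mᵗ). -/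
open Matrix Complex Real

theorem escape_curve (φ : ℝ) (h1 : Real.pi / 4 < φ) (h2 : φ < Real.pi / 2) :
    let c : ℝ := Real.sqrt (-Real.cos (2 * φ))
    let a : ℝ → ℝ := fun s => (c + s * (1 - c)) / c
    let b : ℝ → ℝ := fun s => Real.sqrt ((a s) ^ 2 - ((a s) ^ 2)⁻¹)
    let γ : ℝ → Matrix (Fin 2) (Fin 2) ℂ :=
      fun s => !![(a s : ℂ), (b s : ℂ); 0, (a s : ℂ)⁻¹]
    let z : Matrix (Fin 2) (Fin 2) ℂ :=
      !![Complex.exp (Complex.I * φ), 0; 0, Complex.exp (-Complex.I * φ)]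
    let σ : ℝ → ℝ := fun s => 2 * (a s) ^ 2 * Real.cos (2 * φ)
    c ∈ Set.Ioo (0 : ℝ) 1 ∧
    ContinuousOn σ (Set.Icc 0 1) ∧
    StrictAntiOn σ (Set.Icc 0 1) ∧
    σ 0 = 2 * Real.cos (2 * φ) ∧
    σ 0 ∈ Set.Ioo (-2 : ℝ) 0 ∧
    σ 1 = -2 ∧
    ∀ s ∈ Set.Icc (0 : ℝ) 1,
      Matrix.trace ((γ s * z) * (γ s * z)ᵀ) = (σ s : ℂ) := by
  intro c a b γ z σ
  have hπ : (0:ℝ) < Real.pi := Real.pi_pos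
  have hlt1 : Real.pi / 2 < 2 * φ := by linarith
  have hlt2 : 2 * φ < Real.pi := by linarith
  have hcosneg : Real.cos (2 * φ) < 0 :=
    Real.cos_neg_of_pi_div_two_lt_of_lt hlt1 (by linarith)
  have hcosgt : -1 < Real.cos (2 * φ) := by
    have := Real.cos_lt_cos_of_nonneg_of_le_pi (by linarith : (0:ℝ) ≤ 2 * φ)
      (le_refl Real.pi) hlt2
    rwa [Real.cos_pi] at this
  have hc0 : 0 < c := Real.sqrt_pos.mpr (by linarith)
  have hc1 : c < 1 := by
    have : c < Real.sqrt 1 := by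
      apply Real.sqrt_lt_sqrt (by linarith)
      linarith
    simpa using this
  have hcne : c ≠ 0 := ne_of_gt hc0
  have hcsq : c ^ 2 = -Real.cos (2 * φ) := Real.sq_sqrt (by linarith)
  -- a s ≥ 1 on [0,1], and a is monotone
  have ha_ge : ∀ s ∈ Set.Icc (0:ℝ) 1, 1 ≤ a s := by
    intro s hs
    rw [Set.mem_Icc] at hs
    have h1c : 0 ≤ 1 - c := by linarith
    have : 0 ≤ s * (1 - c) := mul_nonneg hs.1 h1c
    rw [show a s = (c + s * (1 - c)) / c from rfl, le_div_iff₀ hc0]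
    linarith
  refine ⟨⟨hc0, hc1⟩, ?_, ?_, ?_, ?_, ?_, ?_⟩
  · -- continuity
    apply Continuous.continuousOn
    show Continuous fun s => 2 * ((c + s * (1 - c)) / c) ^ 2 * Real.cos (2 * φ)
    fun_prop
  · -- strict anti
    intro s hs t ht hst
    have has : 1 ≤ a s := ha_ge s hs
    have hat : a s < a t := by
      show (c + s * (1 - c)) / c < (c + t * (1 - c)) / c
      apply div_lt_div_of_pos_right ?_ hc0
      have : s * (1 - c) < t * (1 - c) := by
        apply mul_lt_mul_of_pos_right hst (by linarith)
      linarith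
    have hsq : a s ^ 2 < a t ^ 2 := by nlinarith
    show 2 * a t ^ 2 * Real.cos (2*φ) < 2 * a s ^ 2 * Real.cos (2*φ)
    have : (2:ℝ) * a s ^ 2 < 2 * a t ^ 2 := by linarith
    exact mul_lt_mul_of_neg_right this hcosneg
  · show 2 * ((c + 0 * (1 - c)) / c) ^ 2 * Real.cos (2*φ) = 2 * Real.cos (2*φ)
    rw [zero_mul, add_zero, div_self hcne]; ring
  · constructor
    · show -2 < 2 * ((c + 0 * (1 - c)) / c) ^ 2 * Real.cos (2*φ)
      rw [zero_mul, add_zero, div_self hcne]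
      nlinarith
    · show 2 * ((c + 0 * (1 - c)) / c) ^ 2 * Real.cos (2*φ) < 0
      rw [zero_mul, add_zero, div_self hcne]
      nlinarith
  · show 2 * ((c + 1 * (1 - c)) / c) ^ 2 * Real.cos (2*φ) = -2
    rw [one_mul]
    have h : c + (1 - c) = 1 := by ring
    rw [h, div_pow, one_pow]
    rw [hcsq, div_neg]
    field_simp
    rw [div_self (ne_of_lt hcosneg)]
  · intro s hs
    have has : 1 ≤ a s := ha_ge s hs
    have hane : (a s : ℝ) ≠ 0 := by linarith
    have haneC : ((a s : ℝ) : ℂ) ≠ 0 := by exact_mod_cast hane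
    have hb2 : (b s : ℝ) ^ 2 = (a s) ^ 2 - ((a s) ^ 2)⁻¹ := by
      apply Real.sq_sqrt
      have h2 : 1 ≤ (a s)^2 := by nlinarith
      have : ((a s)^2)⁻¹ ≤ 1 := by
        rw [inv_le_one_iff₀]; right; exact h2
      linarith
    set E := Complex.exp (Complex.I * φ) with hE
    set E' := Complex.exp (-Complex.I * φ) with hE'
    have hmul : γ s * z = !![(a s : ℂ) * E, (b s : ℂ) * E'; 0, ((a s : ℂ))⁻¹ * E'] := by
      show (!![(a s : ℂ), (b s : ℂ); 0, (a s : ℂ)⁻¹] : Matrix (Fin 2) (Fin 2) ℂ) *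
        !![E, 0; 0, E'] = _
      rw [Matrix.mul_fin_two]
      congr 1 <;> ring
    have key : ∀ p q r : ℂ,
        Matrix.trace ((!![p, q; 0, r] : Matrix (Fin 2) (Fin 2) ℂ) * (!![p, q; 0, r])ᵀ)
          = p * p + q * q + r * r := by
      intro p q r
      have ht : (!![p, q; 0, r] : Matrix (Fin 2) (Fin 2) ℂ)ᵀ = !![p, 0; q, r] := by
        ext i j; fin_cases i <;> fin_cases j <;> rfl
      rw [ht, Matrix.mul_fin_two, Matrix.trace_fin_two_of]
      try ring
    rw [hmul, key]
    have hexp2 : E * E + E' * E' = 2 * Complex.cos (2 * φ) := by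
      rw [Complex.two_cos, hE, hE', ← Complex.exp_add, ← Complex.exp_add]
      congr 1 <;> [skip; skip]
      · congr 1; push_cast; ring
      · congr 1; push_cast; ring
    have hb2C : ((b s : ℝ) : ℂ) ^ 2 =
        ((a s : ℝ) : ℂ) ^ 2 - (((a s : ℝ) : ℂ) ^ 2)⁻¹ := by
      exact_mod_cast congrArg (fun x : ℝ => (x : ℂ)) hb2
    show (a s : ℂ) * E * ((a s : ℂ) * E) + (b s : ℂ) * E' * ((b s : ℂ) * E')
        + ((a s : ℂ))⁻¹ * E' * (((a s : ℂ))⁻¹ * E') = ((2 * (a s)^2 * Real.cos (2*φ) : ℝ) : ℂ)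
    push_cast
    linear_combination E' * E' * hb2C + ((a s : ℂ)) ^ 2 * hexp2
end
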